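/- Let L be an even unimodular lattice (a free ℤ-module of finite rank with nondegenerate symmetric ℤ-valued bilinear form b such that b(x,x) ∈ 2ℤ for all x and |d(L)| = 1), let M ⊆ L be a primitive nondegenerate sublattice (L/M is torsion-free), and let N = M^⊥ = {x ∈ L : b(x, m) = 0 for all m ∈ M}. Then there is a group isomorphism φ : M∨/M → N∨/N between the discriminant groups which anti-preserves the discriminant quadratic forms: q_N(φ(ξ)) = −q_M(ξ) in ℚ/2ℤ for every ξ ∈ M∨/M. -/

import Mathlib

open Matrix

/-- The natural `ℤ`-linear embedding of `ℤⁿ` into `ℚⁿ`. -/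
def castLM (n : ℕ) : (Fin n → ℤ) →ₗ[ℤ] (Fin n → ℚ) where
  toFun x := fun i => (x i : ℚ)
  map_add' x y := by funext i; simp
  map_smul' c x := by funext i; simp [zsmul_eq_mul]

/-- The `ℚ`-span of a sublattice `M ⊆ ℤⁿ` inside `ℚⁿ`, viewed as a `ℤ`-module;
it realizes `M ⊗ ℚ`. -/
def ratSpan {n : ℕ} (M : Submodule ℤ (Fin n → ℤ)) : Submodule ℤ (Fin n → ℚ) :=
  (Submodule.span ℚ ((castLM n) '' (M : Set (Fin n → ℤ)))).restrictScalars ℤ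

/-- The `ℤ`-module of rational vectors pairing integrally with every element of
`M` under the bilinear form with Gram matrix `G`. -/
def integralPairing {n : ℕ} (G : Matrix (Fin n) (Fin n) ℚ)
    (M : Submodule ℤ (Fin n → ℤ)) : Submodule ℤ (Fin n → ℚ) where
  carrier := {v | ∀ x ∈ M, ∃ k : ℤ, v ⬝ᵥ G.mulVec (castLM n x) = (k : ℚ)}
  zero_mem' := fun x _ => ⟨0, by simp⟩
  add_mem' := by
    intro v w hv hw x hx
    obtain ⟨k, hk⟩ := hv x hx
    obtain ⟨l, hl⟩ := hw x hx
    exact ⟨k + l, by rw [add_dotProduct, hk, hl]; push_cast; ring⟩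
  smul_mem' := by
    intro c v hv x hx
    obtain ⟨k, hk⟩ := hv x hx
    exact ⟨c * k, by rw [smul_dotProduct, hk, zsmul_eq_mul]; push_cast; ring⟩

/-- The dual lattice `M∨ = {v ∈ M ⊗ ℚ : b(v,x) ∈ ℤ for all x ∈ M}` of a sublattice
`M ⊆ ℤⁿ`, realized inside `ℚⁿ`. -/
def dualIn {n : ℕ} (G : Matrix (Fin n) (Fin n) ℚ)
    (M : Submodule ℤ (Fin n → ℤ)) : Submodule ℤ (Fin n → ℚ) :=
  ratSpan M ⊓ integralPairing G M

/-- The discriminant group `M∨/M` of a sublattice `M ⊆ ℤⁿ`. -/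
abbrev discGroup {n : ℕ} (G : Matrix (Fin n) (Fin n) ℚ)
    (M : Submodule ℤ (Fin n → ℤ)) :=
  (↥(dualIn G M)) ⧸
    (Submodule.comap (dualIn G M).subtype (Submodule.map (castLM n) M))

namespace Nik

variable {n : ℕ}

lemma castLM_inj : Function.Injective (castLM n) := by
  intro x y h
  funext i
  have h2 := congrFun h i
  simp only [castLM, LinearMap.coe_mk, AddHom.coe_mk] at h2
  exact_mod_cast h2

lemma exists_int_smul (u : Fin n → ℚ) :
    ∃ d : ℤ, d ≠ 0 ∧ ∃ x : Fin n → ℤ, (d : ℚ) • u = castLM n x := by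
  refine ⟨∏ i, ((u i).den : ℤ), by positivity, fun i => (u i).num * ∏ j ∈ Finset.univ.erase i, ((u j).den : ℤ), ?_⟩
  funext i
  have h1 : (∏ j, ((u j).den : ℤ)) = ((u i).den : ℤ) * ∏ j ∈ Finset.univ.erase i, ((u j).den : ℤ) :=
    (Finset.mul_prod_erase _ _ (Finset.mem_univ i)).symm
  simp only [Pi.smul_apply, smul_eq_mul, castLM, LinearMap.coe_mk, AddHom.coe_mk]
  rw [h1]
  push_cast
  rw [mul_comm ((u i).den : ℚ), mul_assoc, Rat.den_mul_eq_num]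
  show _ = ((u i).num : ℚ) * _
  ring

lemma ratSpan_exists {P : Submodule ℤ (Fin n → ℤ)} {v : Fin n → ℚ} (hv : v ∈ ratSpan P) :
    ∃ d : ℤ, d ≠ 0 ∧ ∃ m ∈ P, (d : ℚ) • v = castLM n m := by
  have hv' : v ∈ Submodule.span ℚ ((castLM n) '' (P : Set (Fin n → ℤ))) := hv
  clear hv
  induction hv' using Submodule.span_induction with
  | mem x hx =>
    obtain ⟨m, hm, rfl⟩ := hx
    exact ⟨1, one_ne_zero, m, hm, by rw [Int.cast_one, one_smul]⟩
  | zero => exact ⟨1, one_ne_zero, 0, P.zero_mem, by simp⟩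
  | add x y _ _ ihx ihy =>
    obtain ⟨d, hd, m, hm, hdm⟩ := ihx
    obtain ⟨e, he, l, hl, hel⟩ := ihy
    refine ⟨d * e, mul_ne_zero hd he, e • m + d • l, P.add_mem (P.smul_mem _ hm) (P.smul_mem _ hl), ?_⟩
    rw [map_add, LinearMap.map_smul, LinearMap.map_smul, smul_add]
    rw [← Int.cast_smul_eq_zsmul ℚ e (castLM n m), ← Int.cast_smul_eq_zsmul ℚ d (castLM n l),
      ← hdm, ← hel]
    push_cast
    rw [smul_smul, smul_smul, mul_comm (d:ℚ) (e:ℚ)]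
  | smul q x _ ih =>
    obtain ⟨d, hd, m, hm, hdm⟩ := ih
    refine ⟨(q.den : ℤ) * d, mul_ne_zero (by exact_mod_cast q.den_nz) hd, q.num • m,
      P.smul_mem _ hm, ?_⟩
    rw [LinearMap.map_smul, ← Int.cast_smul_eq_zsmul ℚ q.num (castLM n m), ← hdm]
    push_cast
    rw [smul_smul, smul_smul]
    congr 1
    rw [mul_comm (q.den : ℚ) (d : ℚ), mul_assoc, Rat.den_mul_eq_num]
    ring

lemma castB (G : Matrix (Fin n) (Fin n) ℤ) (x y : Fin n → ℤ) :
    castLM n x ⬝ᵥ (G.map (Int.cast : ℤ → ℚ)).mulVec (castLM n y)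
      = ((x ⬝ᵥ G.mulVec y : ℤ) : ℚ) := by
  simp only [dotProduct, Matrix.mulVec, Matrix.map_apply, castLM, LinearMap.coe_mk, AddHom.coe_mk]
  push_cast
  rfl


lemma symmB {R : Type*} [CommRing R] (G : Matrix (Fin n) (Fin n) R) (hG : G.IsSymm)
    (v w : Fin n → R) : v ⬝ᵥ G.mulVec w = w ⬝ᵥ G.mulVec v := by
  rw [dotProduct_mulVec v, dotProduct_comm w, ← vecMul_transpose, hG]

lemma smul_pair (G : Matrix (Fin n) (Fin n) ℚ) (d e : ℤ) (v w : Fin n → ℚ) :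
    ((d:ℚ) • v) ⬝ᵥ G.mulVec ((e:ℚ) • w) = ((d*e : ℤ) : ℚ) * (v ⬝ᵥ G.mulVec w) := by
  rw [smul_dotProduct, mulVec_smul, dotProduct_smul, smul_eq_mul, smul_eq_mul]
  push_cast; ring

lemma span_orth (G : Matrix (Fin n) (Fin n) ℤ) (hG : G.IsSymm) (M N : Submodule ℤ (Fin n → ℤ))
    (hMN : ∀ y ∈ N, ∀ m ∈ M, y ⬝ᵥ G.mulVec m = 0)
    {v w : Fin n → ℚ} (hv : v ∈ ratSpan M) (hw : w ∈ ratSpan N) :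
    v ⬝ᵥ (G.map (Int.cast : ℤ → ℚ)).mulVec w = 0 := by
  obtain ⟨d, hd, m, hm, hdm⟩ := ratSpan_exists hv
  obtain ⟨e, he, y, hy, hey⟩ := ratSpan_exists hw
  have h0 : ((d:ℚ) • v) ⬝ᵥ (G.map (Int.cast : ℤ → ℚ)).mulVec ((e:ℚ) • w) = 0 := by
    rw [hdm, hey, castB, symmB G hG, hMN y hy m hm, Int.cast_zero]
  rw [smul_pair] at h0
  rcases mul_eq_zero.1 h0 with h | h
  · exact absurd (by exact_mod_cast h) (mul_ne_zero hd he)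
  · exact h

lemma ratSpan_int (P : Submodule ℤ (Fin n → ℤ))
    (hprimP : ∀ (c : ℤ) (x : Fin n → ℤ), c ≠ 0 → c • x ∈ P → x ∈ P) (z : Fin n → ℤ)
    (hz : castLM n z ∈ ratSpan P) : z ∈ P := by
  obtain ⟨d, hd, m, hm, hdm⟩ := ratSpan_exists hz
  have h2 : castLM n (d • z) = castLM n m := by
    rw [LinearMap.map_smul, ← Int.cast_smul_eq_zsmul ℚ, hdm]
  exact hprimP d z hd (by rw [castLM_inj h2]; exact hm)

lemma mem_ratSpan_of_smul (P : Submodule ℤ (Fin n → ℤ)) {v : Fin n → ℚ} (d : ℤ) (hd : d ≠ 0)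
    (x : Fin n → ℤ) (hx : x ∈ P) (h : (d:ℚ) • v = castLM n x) : v ∈ ratSpan P := by
  have h1 : castLM n x ∈ Submodule.span ℚ ((castLM n) '' (P : Set (Fin n → ℤ))) :=
    Submodule.subset_span ⟨x, hx, rfl⟩
  have h2 : v = (d:ℚ)⁻¹ • castLM n x := by
    rw [← h, inv_smul_smul₀ (by exact_mod_cast hd)]
  show v ∈ Submodule.span ℚ ((castLM n) '' (P : Set (Fin n → ℤ)))
  rw [h2]
  exact Submodule.smul_mem _ _ h1

lemma mem_castLM (P : Submodule ℤ (Fin n → ℤ)) {x : Fin n → ℤ} (hx : x ∈ P) :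
    castLM n x ∈ ratSpan P :=
  Submodule.subset_span ⟨x, hx, rfl⟩


lemma exists_int_lift (G : Matrix (Fin n) (Fin n) ℤ) (hunimod : G.det.natAbs = 1)
    (P : Submodule ℤ (Fin n → ℤ))
    (hprimP : ∀ (c : ℤ) (x : Fin n → ℤ), c ≠ 0 → c • x ∈ P → x ∈ P)
    (v : Fin n → ℚ)
    (hv : ∀ x ∈ P, ∃ k : ℤ, v ⬝ᵥ (G.map (Int.cast : ℤ → ℚ)).mulVec (castLM n x) = (k:ℚ)) :
    ∃ x₀ : Fin n → ℤ, ∀ m ∈ P,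
      castLM n x₀ ⬝ᵥ (G.map (Int.cast : ℤ → ℚ)).mulVec (castLM n m)
        = v ⬝ᵥ (G.map (Int.cast : ℤ → ℚ)).mulVec (castLM n m) := by
  classical
  set Gq := G.map (Int.cast : ℤ → ℚ) with hGq
  haveI hNZ : NoZeroSMulDivisors ℤ ((Fin n → ℤ) ⧸ P) := by
    constructor
    intro c q h
    by_cases hc : c = 0
    · exact Or.inl hc
    · right
      obtain ⟨x, rfl⟩ := P.mkQ_surjective q
      have h1 : P.mkQ (c • x) = 0 := by rw [LinearMap.map_smul]; exact h
      have h2 : c • x ∈ P := by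
        rw [← Submodule.ker_mkQ P]; exact LinearMap.mem_ker.2 h1
      have h3 : x ∈ P := hprimP c x hc h2
      rw [Submodule.mkQ_apply, Submodule.Quotient.mk_eq_zero]
      exact h3
  haveI : Module.Finite ℤ ((Fin n → ℤ) ⧸ P) :=
    Module.Finite.of_surjective P.mkQ P.mkQ_surjective
  haveI : Module.Free ℤ ((Fin n → ℤ) ⧸ P) := Module.free_of_finite_type_torsion_free'
  obtain ⟨s, hs⟩ := Module.projective_lifting_property P.mkQ LinearMap.id P.mkQ_surjective
  set π0 : (Fin n → ℤ) →ₗ[ℤ] (Fin n → ℤ) := LinearMap.id - s.comp P.mkQ with hπ0def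
  have hπ0 : ∀ x, π0 x ∈ P := by
    intro x
    have h1 : P.mkQ (π0 x) = 0 := by
      simp only [hπ0def, LinearMap.sub_apply, LinearMap.id_apply, LinearMap.comp_apply, map_sub]
      have := congrFun (congrArg DFunLike.coe hs) (P.mkQ x)
      simp only [LinearMap.comp_apply, LinearMap.id_apply] at this
      rw [this, sub_self]
    rw [← Submodule.ker_mkQ P]; exact LinearMap.mem_ker.2 h1
  have hπ0id : ∀ x ∈ P, π0 x = x := by
    intro x hx
    have h1 : P.mkQ x = 0 := by
      rw [Submodule.mkQ_apply, Submodule.Quotient.mk_eq_zero]; exact hx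
    simp only [hπ0def, LinearMap.sub_apply, LinearMap.id_apply, LinearMap.comp_apply, h1,
      map_zero, sub_zero]
  -- the linear functional w ↦ v ⬝ᵥ Gq w
  set Lv : (Fin n → ℚ) →ₗ[ℚ] ℚ :=
    { toFun := fun w => v ⬝ᵥ Gq.mulVec w
      map_add' := by
        intro a b
        show v ⬝ᵥ Gq *ᵥ (a + b) = v ⬝ᵥ Gq *ᵥ a + v ⬝ᵥ Gq *ᵥ b
        rw [mulVec_add, dotProduct_add]
      map_smul' := by
        intro c a
        show v ⬝ᵥ Gq *ᵥ (c • a) = c • (v ⬝ᵥ Gq *ᵥ a)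
        rw [mulVec_smul, dotProduct_smul] } with hLv
  set W : (Fin n → ℤ) →ₗ[ℤ] ℚ :=
    (Lv.restrictScalars ℤ).comp ((castLM n).comp π0) with hW
  have hWval : ∀ x, W x = v ⬝ᵥ Gq.mulVec (castLM n (π0 x)) := fun x => rfl
  set fZ : (Fin n → ℤ) → ℤ := fun x => Classical.choose (hv (π0 x) (hπ0 x)) with hfZ
  have hfZs : ∀ x, W x = ((fZ x : ℤ) : ℚ) := fun x =>
    Classical.choose_spec (hv (π0 x) (hπ0 x))
  set k : Fin n → ℤ := fun i => fZ (Pi.single i 1) with hk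
  have hWsum : ∀ y : Fin n → ℤ, W y = ((k ⬝ᵥ y : ℤ) : ℚ) := by
    intro y
    have h1 : y = ∑ i, Pi.single i (y i) := (Finset.univ_sum_single y).symm
    rw [h1, map_sum]
    have h2 : ∀ i, Pi.single i (y i) = y i • (Pi.single i (1:ℤ) : Fin n → ℤ) := by
      intro i
      funext j
      rcases eq_or_ne j i with rfl | hji
      · simp
      · simp [Pi.single_eq_of_ne hji]
    calc (∑ i, W (Pi.single i (y i)))
        = ∑ i, ((y i * k i : ℤ) : ℚ) := by
          refine Finset.sum_congr rfl fun i _ => ?_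
          rw [h2 i, LinearMap.map_smul, hfZs (Pi.single i (1:ℤ))]
          push_cast [zsmul_eq_mul]
          rw [hk]
      _ = ((k ⬝ᵥ ∑ i, Pi.single i (y i) : ℤ) : ℚ) := by
          rw [← h1]
          simp only [dotProduct]
          push_cast
          exact Finset.sum_congr rfl fun i _ => by ring
  have hu : IsUnit G.det := by
    rcases Int.natAbs_eq_iff.mp hunimod with h | h <;> rw [Int.isUnit_iff] <;> simp [h]
  haveI := G.invertibleOfIsUnitDet hu
  refine ⟨k ᵥ* ⅟G, ?_⟩
  intro m hm
  have hx0 : (k ᵥ* ⅟G) ⬝ᵥ G.mulVec m = k ⬝ᵥ m := by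
    rw [dotProduct_mulVec, vecMul_vecMul, invOf_mul_self, vecMul_one]
  calc castLM n (k ᵥ* ⅟G) ⬝ᵥ Gq.mulVec (castLM n m)
      = (((k ᵥ* ⅟G) ⬝ᵥ G.mulVec m : ℤ) : ℚ) := castB G _ m
    _ = ((k ⬝ᵥ m : ℤ) : ℚ) := by rw [hx0]
    _ = W m := (hWsum m).symm
    _ = v ⬝ᵥ Gq.mulVec (castLM n m) := by rw [hWval, hπ0id m hm]


lemma mk_eq (Gq : Matrix (Fin n) (Fin n) ℚ) (P : Submodule ℤ (Fin n → ℤ))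
    (hint : ∀ z, castLM n z ∈ ratSpan P → z ∈ P)
    (s t : dualIn Gq P) (z : Fin n → ℤ) (hz : (s : Fin n → ℚ) - (t : Fin n → ℚ) = castLM n z) :
    (Submodule.Quotient.mk s : discGroup Gq P) = Submodule.Quotient.mk t := by
  rw [Submodule.Quotient.eq]
  have hsP : (s : Fin n → ℚ) ∈ ratSpan P := s.2.1
  have htP : (t : Fin n → ℚ) ∈ ratSpan P := t.2.1
  have hzP : z ∈ P := hint z (hz ▸ Submodule.sub_mem _ hsP htP)
  refine Submodule.mem_comap.2 (Submodule.mem_map.2 ⟨z, hzP, ?_⟩)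
  rw [← hz]
  rfl

lemma buildHom (Gq : Matrix (Fin n) (Fin n) ℚ) (P P' : Submodule ℤ (Fin n → ℤ))
    (hint' : ∀ z, castLM n z ∈ ratSpan P' → z ∈ P')
    (lift : ∀ v : dualIn Gq P, ∃ x : Fin n → ℤ, castLM n x - (v : Fin n → ℚ) ∈ dualIn Gq P') :
    ∃ (pick : dualIn Gq P → (Fin n → ℤ))
      (hp : ∀ v, castLM n (pick v) - (v : Fin n → ℚ) ∈ dualIn Gq P')
      (F : dualIn Gq P →ₗ[ℤ] discGroup Gq P'),
      ∀ v, F v = Submodule.Quotient.mk ⟨castLM n (pick v) - (v : Fin n → ℚ), hp v⟩ := by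
  classical
  choose pick hp using lift
  refine ⟨pick, hp,
    { toFun := fun v => Submodule.Quotient.mk ⟨castLM n (pick v) - (v : Fin n → ℚ), hp v⟩
      map_add' := ?_
      map_smul' := ?_ }, fun v => rfl⟩
  · intro v w
    rw [← Submodule.Quotient.mk_add]
    apply mk_eq Gq P' hint' _ _ (pick (v + w) - pick v - pick w)
    show castLM n (pick (v+w)) - ((v + w : dualIn Gq P) : Fin n → ℚ)
        - ((castLM n (pick v) - (v : Fin n → ℚ)) + (castLM n (pick w) - (w : Fin n → ℚ)))
        = castLM n (pick (v+w) - pick v - pick w)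
    rw [map_sub, map_sub, Submodule.coe_add]
    ring
  · intro c v
    rw [RingHom.id_apply, ← Submodule.Quotient.mk_smul]
    apply mk_eq Gq P' hint' _ _ (pick (c • v) - c • pick v)
    show castLM n (pick (c • v)) - ((c • v : dualIn Gq P) : Fin n → ℚ)
        - (c • (castLM n (pick v) - (v : Fin n → ℚ)))
        = castLM n (pick (c • v) - c • pick v)
    rw [map_sub, LinearMap.map_smul, Submodule.coe_smul, smul_sub]
    abel


end Nik

open Nik in
/-- Nikulin's Proposition 1.6.1: let `L = ℤⁿ` be an even unimodular lattice with
symmetric bilinear form `b(x,y) = xᵀ G y` (`b(x,x)` always even, `|det G| = 1`),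
let `M ⊆ L` be a primitive nondegenerate sublattice (`L/M` torsion-free), and let
`N = M^⊥ = {x ∈ L : b(x,m) = 0 for all m ∈ M}`. Then there is a group isomorphism
`φ : M∨/M → N∨/N` of discriminant groups with `q_N(φ(ξ)) = -q_M(ξ)` in `ℚ/2ℤ`,
i.e. for representatives `v` of `ξ` and `w` of `φ(ξ)` one has
`b(w,w) + b(v,v) ∈ 2ℤ`. -/
theorem discriminant_forms_of_primitive_embedding (n : ℕ)
    (G : Matrix (Fin n) (Fin n) ℤ) (hsymm : G.IsSymm)
    (heven : ∀ x : Fin n → ℤ, ∃ k : ℤ, x ⬝ᵥ G.mulVec x = 2 * k)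
    (hunimod : G.det.natAbs = 1)
    (M : Submodule ℤ (Fin n → ℤ))
    (hprim : ∀ (c : ℤ) (x : Fin n → ℤ), c ≠ 0 → c • x ∈ M → x ∈ M)
    (hnondeg : ∀ x ∈ M, (∀ y ∈ M, x ⬝ᵥ G.mulVec y = 0) → x = 0)
    (N : Submodule ℤ (Fin n → ℤ))
    (hN : ∀ x : Fin n → ℤ, x ∈ N ↔ ∀ m ∈ M, x ⬝ᵥ G.mulVec m = 0) :
    ∃ φ : discGroup (G.map (Int.cast : ℤ → ℚ)) M ≃+
        discGroup (G.map (Int.cast : ℤ → ℚ)) N,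
      ∀ (v : dualIn (G.map (Int.cast : ℤ → ℚ)) M)
        (w : dualIn (G.map (Int.cast : ℤ → ℚ)) N),
        φ (Submodule.Quotient.mk v) = Submodule.Quotient.mk w →
        ∃ k : ℤ,
          (w : Fin n → ℚ) ⬝ᵥ (G.map (Int.cast : ℤ → ℚ)).mulVec (w : Fin n → ℚ) +
            (v : Fin n → ℚ) ⬝ᵥ (G.map (Int.cast : ℤ → ℚ)).mulVec (v : Fin n → ℚ) =
          2 * (k : ℚ) := by
  classical
  set Gq := G.map (Int.cast : ℤ → ℚ) with hGqdef
  have hGqsymm : Gq.IsSymm := hsymm.map _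
  have qsymm : ∀ v w : Fin n → ℚ, v ⬝ᵥ Gq.mulVec w = w ⬝ᵥ Gq.mulVec v :=
    fun v w => symmB Gq hGqsymm v w
  have castBq : ∀ x y : Fin n → ℤ, castLM n x ⬝ᵥ Gq.mulVec (castLM n y)
      = ((x ⬝ᵥ G.mulVec y : ℤ) : ℚ) := fun x y => castB G x y
  have hMN : ∀ y ∈ N, ∀ m ∈ M, y ⬝ᵥ G.mulVec m = 0 := fun y hy m hm => (hN y).1 hy m hm
  have orthQ : ∀ {v w : Fin n → ℚ}, v ∈ ratSpan M → w ∈ ratSpan N → v ⬝ᵥ Gq.mulVec w = 0 :=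
    fun hv hw => span_orth G hsymm M N hMN hv hw
  -- N is primitive
  have hprimN : ∀ (c : ℤ) (x : Fin n → ℤ), c ≠ 0 → c • x ∈ N → x ∈ N := by
    intro c x hc hcx
    rw [hN]
    intro m hm
    have h1 := (hN _).1 hcx m hm
    rw [smul_dotProduct, zsmul_eq_mul] at h1
    rcases mul_eq_zero.1 h1 with h | h
    · exact absurd h hc
    · exact h
  -- global nondegeneracy over ℚ
  have hdet : IsUnit G.det := by
    rcases Int.natAbs_eq_iff.mp hunimod with h | h <;> rw [Int.isUnit_iff] <;> simp [h]
  haveI instInv : Invertible G := G.invertibleOfIsUnitDet hdet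
  haveI instInvQ : Invertible Gq := by
    have h1 : Invertible ((Int.castRingHom ℚ).mapMatrix G) := Invertible.map _ G
    rw [RingHom.mapMatrix_apply] at h1
    exact h1
  have globND : ∀ v : Fin n → ℚ, (∀ w, v ⬝ᵥ Gq.mulVec w = 0) → v = 0 := by
    intro v hv
    have h1 : v ᵥ* Gq = 0 := by
      funext i
      have h2 := hv (Pi.single i 1)
      rw [dotProduct_mulVec, dotProduct_single, mul_one] at h2
      exact h2
    calc v = v ᵥ* 1 := (vecMul_one v).symm
      _ = v ᵥ* (Gq * ⅟Gq) := by rw [mul_invOf_self]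
      _ = (v ᵥ* Gq) ᵥ* ⅟Gq := (vecMul_vecMul v Gq (⅟Gq)).symm
      _ = 0 := by rw [h1, zero_vecMul]
  -- u orthogonal to M integrally lands in the span of N
  have perpM : ∀ u : Fin n → ℚ, (∀ m ∈ M, u ⬝ᵥ Gq.mulVec (castLM n m) = 0) → u ∈ ratSpan N := by
    intro u hu
    obtain ⟨d, hd, x, hx⟩ := exists_int_smul u
    have hxN : x ∈ N := by
      rw [hN]
      intro m hm
      have h1 : castLM n x ⬝ᵥ Gq.mulVec (castLM n m) = 0 := by
        rw [← hx, smul_dotProduct, hu m hm, smul_zero]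
      rw [castBq] at h1
      exact_mod_cast h1
    exact mem_ratSpan_of_smul N d hd x hxN hx
  -- bilinear-form machinery for the orthogonal decomposition
  set VM : Submodule ℚ (Fin n → ℚ) := Submodule.span ℚ ((castLM n) '' (M : Set _)) with hVM
  set VN : Submodule ℚ (Fin n → ℚ) := Submodule.span ℚ ((castLM n) '' (N : Set _)) with hVN
  have hVMmem : ∀ u : Fin n → ℚ, u ∈ VM ↔ u ∈ ratSpan M := fun u => Iff.rfl
  have hVNmem : ∀ u : Fin n → ℚ, u ∈ VN ↔ u ∈ ratSpan N := fun u => Iff.rfl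
  set Bl : LinearMap.BilinForm ℚ (Fin n → ℚ) := Matrix.toLinearMap₂' ℚ Gq with hBl
  have hBlapply : ∀ v w, Bl v w = v ⬝ᵥ Gq.mulVec w := fun v w =>
    Matrix.toLinearMap₂'_apply' Gq v w
  have hrefl : Bl.IsRefl := by
    intro v w h
    rw [hBlapply] at h ⊢
    rw [qsymm]
    exact h
  have hrest : (Bl.restrict VM).Nondegenerate := by
    refine LinearMap.BilinForm.Nondegenerate.ofSeparatingLeft ?_
    rintro ⟨u, hu⟩ h
    obtain ⟨d, hd, m, hm, hdm⟩ := ratSpan_exists ((hVMmem u).1 hu)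
    have hm0 : m = 0 := by
      apply hnondeg m hm
      intro y hy
      have h2 : u ⬝ᵥ Gq.mulVec (castLM n y) = 0 := by
        have h3 := h ⟨castLM n y, (hVMmem _).2 (mem_castLM M hy)⟩
        simp only [LinearMap.BilinForm.restrict_apply, LinearMap.domRestrict_apply,
          hBlapply] at h3
        exact h3
      have h1 : castLM n m ⬝ᵥ Gq.mulVec (castLM n y) = 0 := by
        rw [← hdm, smul_dotProduct, h2, smul_zero]
      rw [castBq] at h1
      exact_mod_cast h1
    have h4 : (d:ℚ) • u = 0 := by rw [hdm, hm0, map_zero]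
    have h5 : u = 0 := by
      rcases smul_eq_zero.1 h4 with h | h
      · exact absurd (by exact_mod_cast h) hd
      · exact h
    exact Subtype.ext h5
  have hcompl : IsCompl VM (Bl.orthogonal VM) :=
    LinearMap.BilinForm.isCompl_orthogonal_of_restrict_nondegenerate hrefl hrest
  have horthEq : Bl.orthogonal VM = VN := by
    ext u
    constructor
    · intro hu
      rw [hVNmem]
      apply perpM
      intro m hm
      have h1 := hu (castLM n m) ((hVMmem _).2 (mem_castLM M hm))
      rw [hBlapply] at h1
      rw [qsymm]
      exact h1
    · intro hu t ht
      rw [hBlapply]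
      exact orthQ ((hVMmem t).1 ht) ((hVNmem u).1 hu)
  have hsup : VM ⊔ VN = ⊤ := by rw [← horthEq]; exact hcompl.codisjoint.eq_top
  have hdecomp : ∀ u : Fin n → ℚ, ∃ a ∈ VM, ∃ b ∈ VN, u = a + b := by
    intro u
    have h1 : u ∈ VM ⊔ VN := hsup ▸ Submodule.mem_top
    obtain ⟨a, ha, b, hb, hab⟩ := Submodule.mem_sup.1 h1
    exact ⟨a, ha, b, hb, hab.symm⟩
  have hVNnd : ∀ b ∈ VN, (∀ t ∈ VN, b ⬝ᵥ Gq.mulVec t = 0) → b = 0 := by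
    intro b hb hbt
    apply globND
    intro w
    obtain ⟨a2, ha2, b2, hb2, rfl⟩ := hdecomp w
    rw [Matrix.mulVec_add, dotProduct_add]
    have h1 : b ⬝ᵥ Gq.mulVec a2 = 0 := by
      rw [qsymm]
      exact orthQ ((hVMmem a2).1 ha2) ((hVNmem b).1 hb)
    rw [h1, hbt b2 hb2, add_zero]
  have hNperp : ∀ x : Fin n → ℤ, (∀ y ∈ N, x ⬝ᵥ G.mulVec y = 0) → x ∈ M := by
    intro x hx
    obtain ⟨a, ha, b, hb, hab⟩ := hdecomp (castLM n x)
    have hbz : b = 0 := by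
      apply hVNnd b hb
      intro t ht
      have h1 : castLM n x ⬝ᵥ Gq.mulVec t = 0 := by
        obtain ⟨e, he, y, hy, hey⟩ := ratSpan_exists ((hVNmem t).1 ht)
        have h2 : castLM n x ⬝ᵥ Gq.mulVec ((e:ℚ) • t) = 0 := by
          rw [hey, castBq]
          exact_mod_cast hx y hy
        rw [mulVec_smul, dotProduct_smul] at h2
        rcases smul_eq_zero.1 h2 with h | h
        · exact absurd (by exact_mod_cast h) he
        · exact h
      have h3 : a ⬝ᵥ Gq.mulVec t = 0 := orthQ ((hVMmem a).1 ha) ((hVNmem t).1 ht)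
      have h4 : b ⬝ᵥ Gq.mulVec t
          = castLM n x ⬝ᵥ Gq.mulVec t - a ⬝ᵥ Gq.mulVec t := by
        rw [hab, add_dotProduct]
        ring
      rw [h4, h1, h3, sub_zero]
    have hxa : castLM n x ∈ ratSpan M := by
      rw [← hVMmem]
      rw [hbz, add_zero] at hab
      rw [hab]
      exact ha
    exact ratSpan_int M hprim x hxa
  have perpN : ∀ u : Fin n → ℚ, (∀ y ∈ N, u ⬝ᵥ Gq.mulVec (castLM n y) = 0) → u ∈ ratSpan M := by
    intro u hu
    obtain ⟨d, hd, x, hx⟩ := exists_int_smul u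
    have hxM : x ∈ M := by
      apply hNperp
      intro y hy
      have h1 : castLM n x ⬝ᵥ Gq.mulVec (castLM n y) = 0 := by
        rw [← hx, smul_dotProduct, hu y hy, smul_zero]
      rw [castBq] at h1
      exact_mod_cast h1
    exact mem_ratSpan_of_smul M d hd x hxM hx
  -- the two lifting maps
  have liftM : ∀ v : dualIn Gq M, ∃ x : Fin n → ℤ,
      castLM n x - (v : Fin n → ℚ) ∈ dualIn Gq N := by
    intro v
    have hv1 : (v : Fin n → ℚ) ∈ ratSpan M := v.2.1
    have hv2 : (v : Fin n → ℚ) ∈ integralPairing Gq M := v.2.2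
    obtain ⟨x₀, hx₀⟩ := exists_int_lift G hunimod M hprim v.val hv2
    refine ⟨x₀, ?_, ?_⟩
    · apply perpM
      intro m hm
      rw [sub_dotProduct, hx₀ m hm, sub_self]
    · intro y hy
      refine ⟨x₀ ⬝ᵥ G.mulVec y, ?_⟩
      have h1 : (v : Fin n → ℚ) ⬝ᵥ Gq.mulVec (castLM n y) = 0 := orthQ hv1 (mem_castLM N hy)
      rw [sub_dotProduct, castBq, h1, sub_zero]
  have liftN : ∀ w : dualIn Gq N, ∃ y : Fin n → ℤ,
      castLM n y - (w : Fin n → ℚ) ∈ dualIn Gq M := by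
    intro w
    have hw1 : (w : Fin n → ℚ) ∈ ratSpan N := w.2.1
    have hw2 : (w : Fin n → ℚ) ∈ integralPairing Gq N := w.2.2
    obtain ⟨y₀, hy₀⟩ := exists_int_lift G hunimod N hprimN w.val hw2
    refine ⟨y₀, ?_, ?_⟩
    · apply perpN
      intro y hy
      rw [sub_dotProduct, hy₀ y hy, sub_self]
    · intro m hm
      refine ⟨y₀ ⬝ᵥ G.mulVec m, ?_⟩
      have h1 : (w : Fin n → ℚ) ⬝ᵥ Gq.mulVec (castLM n m) = 0 := by
        rw [qsymm]
        exact orthQ (mem_castLM M hm) hw1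
      rw [sub_dotProduct, castBq, h1, sub_zero]
  have hintM : ∀ z, castLM n z ∈ ratSpan M → z ∈ M := ratSpan_int M hprim
  have hintN : ∀ z, castLM n z ∈ ratSpan N → z ∈ N := ratSpan_int N hprimN
  obtain ⟨pickM, hpM, FM, hFM⟩ := buildHom Gq M N hintN liftM
  obtain ⟨pickN, hpN, FN, hFN⟩ := buildHom Gq N M hintM liftN
  have hkerM : Submodule.comap (dualIn Gq M).subtype (Submodule.map (castLM n) M)
      ≤ LinearMap.ker FM := by
    intro v hv
    obtain ⟨m, hm, hmv⟩ := Submodule.mem_map.1 (Submodule.mem_comap.1 hv)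
    have hmv' : castLM n m = (v : Fin n → ℚ) := hmv
    rw [LinearMap.mem_ker, hFM v, ← Submodule.Quotient.mk_zero]
    apply mk_eq Gq N hintN _ _ (pickM v - m)
    show castLM n (pickM v) - (v : Fin n → ℚ) - (0 : Fin n → ℚ) = castLM n (pickM v - m)
    rw [map_sub, ← hmv']
    ring
  have hkerN : Submodule.comap (dualIn Gq N).subtype (Submodule.map (castLM n) N)
      ≤ LinearMap.ker FN := by
    intro w hw
    obtain ⟨y, hy, hyw⟩ := Submodule.mem_map.1 (Submodule.mem_comap.1 hw)
    have hyw' : castLM n y = (w : Fin n → ℚ) := hyw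
    rw [LinearMap.mem_ker, hFN w, ← Submodule.Quotient.mk_zero]
    apply mk_eq Gq M hintM _ _ (pickN w - y)
    show castLM n (pickN w) - (w : Fin n → ℚ) - (0 : Fin n → ℚ) = castLM n (pickN w - y)
    rw [map_sub, ← hyw']
    ring
  set Φ := Submodule.liftQ _ FM hkerM with hΦ
  set Ψ := Submodule.liftQ _ FN hkerN with hΨ
  have hΨΦ : ∀ v : dualIn Gq M, Ψ (FM v) = Submodule.Quotient.mk v := by
    intro v
    rw [hFM v]
    rw [hΨ, Submodule.liftQ_apply, hFN]
    apply mk_eq Gq M hintM _ _ (pickN ⟨castLM n (pickM v) - (v : Fin n → ℚ), hpM v⟩ - pickM v)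
    show castLM n (pickN ⟨castLM n (pickM v) - (v : Fin n → ℚ), hpM v⟩)
        - (castLM n (pickM v) - (v : Fin n → ℚ)) - (v : Fin n → ℚ) = _
    rw [map_sub]
    ring
  have hΦΨ : ∀ w : dualIn Gq N, Φ (FN w) = Submodule.Quotient.mk w := by
    intro w
    rw [hFN w]
    rw [hΦ, Submodule.liftQ_apply, hFM]
    apply mk_eq Gq N hintN _ _ (pickM ⟨castLM n (pickN w) - (w : Fin n → ℚ), hpN w⟩ - pickN w)
    show castLM n (pickM ⟨castLM n (pickN w) - (w : Fin n → ℚ), hpN w⟩)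
        - (castLM n (pickN w) - (w : Fin n → ℚ)) - (w : Fin n → ℚ) = _
    rw [map_sub]
    ring
  have hc1 : Φ.comp Ψ = LinearMap.id := by
    apply Submodule.linearMap_qext
    apply LinearMap.ext
    intro w
    simp only [LinearMap.comp_apply, Submodule.mkQ_apply, LinearMap.id_apply]
    rw [hΨ, Submodule.liftQ_apply]
    exact hΦΨ w
  have hc2 : Ψ.comp Φ = LinearMap.id := by
    apply Submodule.linearMap_qext
    apply LinearMap.ext
    intro v
    simp only [LinearMap.comp_apply, Submodule.mkQ_apply, LinearMap.id_apply]
    rw [hΦ, Submodule.liftQ_apply]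
    exact hΨΦ v
  refine ⟨(LinearEquiv.ofLinear Φ Ψ hc1 hc2).toAddEquiv, ?_⟩
  intro v w hvw
  have hΦv : Φ (Submodule.Quotient.mk v) = Submodule.Quotient.mk w := hvw
  rw [hΦ, Submodule.liftQ_apply, hFM v] at hΦv
  rw [Submodule.Quotient.eq] at hΦv
  have hΦv' := Submodule.mem_comap.1 hΦv
  obtain ⟨z, hzN, hz⟩ := Submodule.mem_map.1 hΦv'
  have hz' : castLM n z = ((⟨castLM n (pickM v) - (v : Fin n → ℚ), hpM v⟩ : dualIn Gq N)
      - w : dualIn Gq N).val := hz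
  have hz'' : castLM n z = castLM n (pickM v) - (v : Fin n → ℚ) - (w : Fin n → ℚ) := hz'
  set u : Fin n → ℤ := pickM v - z with hu
  have hwu : (w : Fin n → ℚ) = castLM n u - (v : Fin n → ℚ) := by
    rw [hu, map_sub, hz'']
    ring
  obtain ⟨k, hk⟩ := heven u
  refine ⟨k, ?_⟩
  have hBu : castLM n u ⬝ᵥ Gq.mulVec (castLM n u) = ((2 * k : ℤ) : ℚ) := by
    rw [castBq, hk]
  have h1 : (w : Fin n → ℚ) ⬝ᵥ Gq.mulVec (v : Fin n → ℚ) = 0 := by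
    rw [qsymm]
    exact orthQ v.2.1 w.2.1
  have hcu : castLM n u = (w : Fin n → ℚ) + (v : Fin n → ℚ) := by
    rw [hwu]; ring
  have h3 : castLM n u ⬝ᵥ Gq.mulVec (v : Fin n → ℚ)
      = (v : Fin n → ℚ) ⬝ᵥ Gq.mulVec (v : Fin n → ℚ) := by
    rw [hcu, add_dotProduct, h1, zero_add]
  have h4 : (v : Fin n → ℚ) ⬝ᵥ Gq.mulVec (castLM n u)
      = (v : Fin n → ℚ) ⬝ᵥ Gq.mulVec (v : Fin n → ℚ) := by
    rw [qsymm]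
    exact h3
  rw [hwu, sub_dotProduct, Matrix.mulVec_sub, dotProduct_sub, dotProduct_sub, h3, h4, hBu]
  push_cast
  ring
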